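/- In the free group F_∞ with free generators (g_k)_{k∈ℤ\{0\}} (with convention g_{-k} = g_k^{-1}), the set Q_n of symmetric words of length 2n, Q_n = { g_{k_1} g_{k_2} ⋯ g_{k_n} g_{k_n} ⋯ g_{k_2} g_{k_1} : k_j ∈ ℤ\{0\}, g_{k_j} ≠ g_{k_{j+1}}^{-1} }, is a free subset of F_∞: every nonempty reduced product x_m ⋯ x_2 x_1 with x_j ∈ Q_n ∪ Q_n^{-1} and x_{j+1} ≠ x_j^{-1} is not the identity. -/

import Mathlib

/-- The generators of `F_∞` indexed by nonzero integers, with `g_{-k} = g_k⁻¹`. -/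
noncomputable def gen (k : ℤ) : FreeGroup ℕ :=
  if 0 < k then FreeGroup.of k.toNat else (FreeGroup.of (-k).toNat)⁻¹

/-- The symmetric word `g_{k_1} ⋯ g_{k_n} g_{k_n} ⋯ g_{k_1}`. -/
noncomputable def symmWord {n : ℕ} (k : Fin n → ℤ) : FreeGroup ℕ :=
  (List.ofFn fun j => gen (k j)).prod * ((List.ofFn fun j => gen (k j)).reverse).prod

/-- The set `Q_n` of symmetric words of length `2n`. -/
noncomputable def Qset (n : ℕ) : Set (FreeGroup ℕ) :=
  { w | ∃ k : Fin n → ℤ, (∀ j, k j ≠ 0) ∧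
      (∀ (j : ℕ) (h : j + 1 < n),
        gen (k ⟨j + 1, h⟩) ≠ (gen (k ⟨j, by omega⟩))⁻¹) ∧
      w = symmWord k }

namespace QsetFreeAux

abbrev Letter := ℕ × Bool

/-- Formal inverse of a letter. -/
def invL (x : Letter) : Letter := (x.1, !x.2)

@[simp] lemma invL_invL (x : Letter) : invL (invL x) = x := by
  cases x with
  | mk a b => simp [invL]

lemma ne_invL_self (x : Letter) : x ≠ invL x := by
  cases x with
  | mk a b => cases b <;> simp [invL]

lemma ne_invL_comm {x y : Letter} (h : x ≠ invL y) : y ≠ invL x := by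
  intro hy
  exact h (by rw [hy, invL_invL])

/-- A word is reduced. -/
def IsRed (L : List Letter) : Prop := L.IsChain (fun x y => y ≠ invL x)

lemma reduce_eq_self : ∀ {L : List Letter}, IsRed L → FreeGroup.reduce L = L := by
  intro L
  induction L with
  | nil => intro _; rfl
  | cons x xs ih =>
    intro h
    rw [FreeGroup.reduce.cons, ih h.tail]
    cases xs with
    | nil => rfl
    | cons y ys =>
      have hrel : y ≠ invL x := (List.isChain_cons_cons.mp h).1
      show (if x.1 = y.1 ∧ x.2 = !y.2 then ys else x :: y :: ys) = x :: y :: ys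
      rw [if_neg]
      rintro ⟨h1, h2⟩
      apply hrel
      have h2' : y.2 = !x.2 := by rw [h2, Bool.not_not]
      exact Prod.ext h1.symm h2' 

lemma mk_ne_one {L : List Letter} (hred : IsRed L) (hne : L ≠ []) :
    FreeGroup.mk L ≠ 1 := by
  intro h
  have h1 : (FreeGroup.mk L).toWord = ([] : List Letter) := by
    rw [h, FreeGroup.toWord_one]
  rw [FreeGroup.toWord_mk, reduce_eq_self hred] at h1
  exact hne h1

/-- The letter associated to a nonzero integer. -/
def letter (k : ℤ) : Letter := if 0 < k then (k.toNat, true) else ((-k).toNat, false)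

lemma gen_eq (k : ℤ) : gen k = FreeGroup.mk [letter k] := by
  unfold gen letter
  split
  · rfl
  · rw [show FreeGroup.of (-k).toNat = FreeGroup.mk [((-k).toNat, true)] from rfl,
      FreeGroup.inv_mk]
    rfl

lemma letter_neg {k : ℤ} (hk : k ≠ 0) : letter (-k) = invL (letter k) := by
  unfold letter invL
  rcases lt_trichotomy k 0 with h | h | h
  · rw [if_pos (show (0:ℤ) < -k by omega), if_neg (show ¬ (0:ℤ) < k by omega)]
    simp
  · exact absurd h hk
  · rw [if_neg (show ¬ (0:ℤ) < -k by omega), if_pos h]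
    simp

/-- The word of a symmetric element. -/
def wordOf {n : ℕ} (a : Fin n → Letter) : List Letter :=
  List.ofFn a ++ (List.ofFn a).reverse

lemma prod_map_mk (L : List Letter) :
    (L.map fun z => FreeGroup.mk [z]).prod = FreeGroup.mk L := by
  induction L with
  | nil => simp [FreeGroup.one_eq_mk]
  | cons x xs ih =>
    simp only [List.map_cons, List.prod_cons, ih, FreeGroup.mul_mk]
    rfl

lemma symmWord_eq {n : ℕ} (k : Fin n → ℤ) :
    symmWord k = FreeGroup.mk (wordOf fun j => letter (k j)) := by
  have h1 : (List.ofFn fun j => gen (k j))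
      = (List.ofFn fun j => letter (k j)).map fun z => FreeGroup.mk [z] := by
    rw [List.map_ofFn]
    congr 1
    funext j
    exact gen_eq (k j)
  unfold symmWord wordOf
  rw [h1, ← List.map_reverse, prod_map_mk, prod_map_mk, FreeGroup.mul_mk]

lemma invRev_wordOf {n : ℕ} (a : Fin n → Letter) :
    FreeGroup.invRev (wordOf a) = wordOf (fun j => invL (a j)) := by
  unfold wordOf FreeGroup.invRev
  rw [List.map_append, List.reverse_append, List.map_reverse, List.reverse_reverse,
    List.map_ofFn]
  rfl

lemma inv_mk_wordOf {n : ℕ} (a : Fin n → Letter) :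
    (FreeGroup.mk (wordOf a))⁻¹ = FreeGroup.mk (wordOf (fun j => invL (a j))) := by
  rw [FreeGroup.inv_mk, invRev_wordOf]

/-- The non-cancellation condition inside a symmetric word. -/
def Good (n : ℕ) (a : Fin n → Letter) : Prop :=
  ∀ (j : ℕ) (h : j + 1 < n), a ⟨j + 1, h⟩ ≠ invL (a ⟨j, by omega⟩)

lemma Good.invL {n : ℕ} {a : Fin n → Letter} (h : Good n a) :
    Good n (fun j => invL (a j)) := by
  intro j hj hcon
  apply h j hj
  have := congrArg QsetFreeAux.invL hcon
  rwa [invL_invL, invL_invL] at this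

lemma isRed_ofFn {n : ℕ} {a : Fin n → Letter} (h : Good n a) :
    IsRed (List.ofFn a) := by
  unfold IsRed
  rw [List.isChain_iff_getElem]
  intro i hi
  simp only [List.length_ofFn] at hi
  rw [List.getElem_ofFn, List.getElem_ofFn]
  exact h i (by omega)

lemma isRed_wordOf {n : ℕ} {a : Fin n → Letter} (h : Good n a) :
    IsRed (wordOf a) := by
  unfold IsRed wordOf
  rw [List.isChain_append]
  refine ⟨isRed_ofFn h, ?_, ?_⟩
  · rw [List.isChain_reverse]
    have := isRed_ofFn h
    unfold IsRed at this
    apply List.IsChain.imp _ this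
    intro x y hxy
    exact ne_invL_comm hxy
  · intro x hx y hy
    rw [List.head?_reverse] at hy
    rw [hx] at hy
    cases hy
    exact ne_invL_self x

lemma exists_word {n : ℕ} (x : FreeGroup ℕ) (hx : x ∈ Qset n) :
    ∃ κ : Fin n → Letter, Good n κ ∧ x = FreeGroup.mk (wordOf κ) := by
  obtain ⟨k, _, hchain, hxw⟩ := hx
  refine ⟨fun j => letter (k j), ?_, by rw [hxw, symmWord_eq]⟩
  intro j hj hcon
  have hcon' : letter (k ⟨j + 1, hj⟩) = invL (letter (k ⟨j, by omega⟩)) := hcon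
  apply hchain j hj
  rw [gen_eq, gen_eq, hcon', show [invL (letter (k ⟨j, by omega⟩))]
      = FreeGroup.invRev [letter (k ⟨j, by omega⟩)] from rfl, ← FreeGroup.inv_mk]

lemma exists_word' {n : ℕ} (x : FreeGroup ℕ) (hx : x ∈ Qset n ∨ x⁻¹ ∈ Qset n) :
    ∃ κ : Fin n → Letter, Good n κ ∧ x = FreeGroup.mk (wordOf κ) := by
  rcases hx with hx | hx
  · exact exists_word x hx
  · obtain ⟨κ, hG, hxe⟩ := exists_word x⁻¹ hx
    refine ⟨fun j => invL (κ j), hG.invL, ?_⟩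
    rw [← inv_mk_wordOf, ← hxe, inv_inv]

/-- The key cancellation step. -/
lemma step {n : ℕ} (a b : Fin n → Letter) (A : List Letter)
    (hred : IsRed (A ++ (List.ofFn a).reverse))
    (hGb : Good n b)
    (hex : ∃ i, b i ≠ invL (a i)) :
    ∃ A', IsRed (A' ++ (List.ofFn b).reverse) ∧
      FreeGroup.mk (A ++ (List.ofFn a).reverse) * FreeGroup.mk (wordOf b)
        = FreeGroup.mk (A' ++ (List.ofFn b).reverse) := by
  classical
  set α := List.ofFn a with hα
  set β := List.ofFn b with hβ
  have hαlen : α.length = n := List.length_ofFn (f := a)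
  have hβlen : β.length = n := List.length_ofFn (f := b)
  have hPex : ∃ i : ℕ, ∃ h : i < n, b ⟨i, h⟩ ≠ invL (a ⟨i, h⟩) := by
    obtain ⟨i, hi⟩ := hex
    exact ⟨i.1, i.2, by simpa using hi⟩
  let c := Nat.find hPex
  obtain ⟨hcn, hbc⟩ : ∃ h : c < n, b ⟨c, h⟩ ≠ invL (a ⟨c, h⟩) := Nat.find_spec hPex
  have hmin : ∀ i (hi : i < c) (h : i < n), b ⟨i, h⟩ = invL (a ⟨i, h⟩) := by
    intro i hi h
    have := Nat.find_min hPex hi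
    push_neg at this
    exact this h
  have htake : β.take c = (α.take c).map invL := by
    apply List.ext_getElem
    · simp [hαlen, hβlen]
    · intro i h1 h2
      simp only [List.getElem_take, List.getElem_map]
      have hic : i < c := by
        simp [hβlen] at h1
        omega
      simp only [hβ, hα, List.getElem_ofFn]
      exact hmin i hic (by omega)
  set T := α.take c with hT
  set P := A ++ (α.drop c).reverse with hP
  set Q := β.drop c ++ β.reverse with hQ
  have e1 : A ++ α.reverse = P ++ T.reverse := by
    rw [hP, List.append_assoc, ← List.reverse_append, List.take_append_drop]
  have e2 : wordOf b = T.map invL ++ Q := by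
    rw [← htake, hQ, wordOf, ← hβ, ← List.append_assoc, List.take_append_drop]
  have hcancel : FreeGroup.mk T.reverse * FreeGroup.mk (T.map invL) = 1 := by
    have hinv : T.map invL = FreeGroup.invRev T.reverse := by
      unfold FreeGroup.invRev
      rw [List.map_reverse, List.reverse_reverse]
      rfl
    rw [hinv, ← FreeGroup.inv_mk, mul_inv_cancel]
  have hdropα : (α.drop c) ≠ [] := by
    intro h
    have := congrArg List.length h
    simp [hαlen] at this
    omega
  have hdropβ : (β.drop c) ≠ [] := by
    intro h
    have := congrArg List.length h
    simp [hβlen] at this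
    omega
  refine ⟨P ++ β.drop c, ?_, ?_⟩
  · have hgoal : IsRed (P ++ Q) := by
      rw [IsRed, List.isChain_append]
      refine ⟨?_, ?_, ?_⟩
      · have : IsRed (P ++ T.reverse) := by rw [← e1]; exact hred
        exact (List.isChain_append.mp this).1
      · have : IsRed (T.map invL ++ Q) := by rw [← e2]; exact isRed_wordOf hGb
        exact (List.isChain_append.mp this).2.1
      · intro x hx y hy
        have hxval : x = a ⟨c, hcn⟩ := by
          rw [hP, List.getLast?_append_of_ne_nil _ (by simpa using hdropα),
            List.getLast?_reverse, List.head?_drop] at hx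
          rw [hα, List.getElem?_eq_getElem (by simp [hcn])] at hx
          simp only [List.getElem_ofFn, Option.mem_def, Option.some_inj] at hx
          exact hx.symm
        have hyval : y = b ⟨c, hcn⟩ := by
          rw [hQ, List.head?_append_of_ne_nil _ hdropβ, List.head?_drop] at hy
          rw [hβ, List.getElem?_eq_getElem (by simp [hcn])] at hy
          simp only [List.getElem_ofFn, Option.mem_def, Option.some_inj] at hy
          exact hy.symm
        rw [hxval, hyval]
        exact hbc
    simpa only [hP, hQ, List.append_assoc] using hgoal
  · rw [e1, e2]
    have h1 : FreeGroup.mk (P ++ T.reverse) = FreeGroup.mk P * FreeGroup.mk T.reverse :=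
      FreeGroup.mul_mk.symm
    have h2 : FreeGroup.mk (T.map invL ++ Q)
        = FreeGroup.mk (T.map invL) * FreeGroup.mk Q := FreeGroup.mul_mk.symm
    rw [h1, h2]
    have h3 : FreeGroup.mk P * FreeGroup.mk T.reverse *
          (FreeGroup.mk (T.map invL) * FreeGroup.mk Q)
        = FreeGroup.mk P *
            (FreeGroup.mk T.reverse * FreeGroup.mk (T.map invL)) * FreeGroup.mk Q := by
      group
    rw [h3, hcancel, mul_one, FreeGroup.mul_mk]
    simp only [hP, hQ, List.append_assoc]

lemma key (n : ℕ) :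
    ∀ (m : ℕ) (κ : Fin (m + 1) → Fin n → Letter),
      (∀ j, Good n (κ j)) →
      (∀ (j : ℕ) (h : j + 1 < m + 1),
        ∃ i, κ ⟨j + 1, h⟩ i ≠ invL (κ ⟨j, by omega⟩ i)) →
      ∃ A, IsRed (A ++ (List.ofFn (κ (Fin.last m))).reverse) ∧
        (List.ofFn fun j => FreeGroup.mk (wordOf (κ j))).prod
          = FreeGroup.mk (A ++ (List.ofFn (κ (Fin.last m))).reverse) := by
  intro m
  induction m with
  | zero =>
    intro κ hG _
    refine ⟨List.ofFn (κ (Fin.last 0)), isRed_wordOf (hG _), ?_⟩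
    simp only [List.ofFn_succ, List.ofFn_zero, List.prod_cons, List.prod_nil, mul_one]
    rfl
  | succ m ih =>
    intro κ hG hex
    obtain ⟨A, hred, hprod⟩ := ih (fun j => κ j.castSucc) (fun j => hG _)
      (fun j h => hex j (by omega))
    obtain ⟨A', hred', heq⟩ := step (κ (Fin.last m).castSucc) (κ (Fin.last (m + 1))) A
      hred (hG _) (hex m (by omega))
    refine ⟨A', hred', ?_⟩
    have hprod' : (List.ofFn fun j : Fin (m + 1) =>
        FreeGroup.mk (wordOf (κ j.castSucc))).prod
        = FreeGroup.mk (A ++ (List.ofFn (κ (Fin.last m).castSucc)).reverse) := hprod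
    rw [List.ofFn_succ', List.concat_eq_append, List.prod_append, List.prod_singleton,
      hprod', heq]

end QsetFreeAux

/-- `Q_n` is a free subset of `F_∞`: no nonempty reduced product of elements of
`Q_n ∪ Q_n⁻¹` equals the identity. -/
theorem Qset_free (n : ℕ) (hn : 0 < n) :
    ∀ (m : ℕ), 0 < m → ∀ x : Fin m → FreeGroup ℕ,
      (∀ j, x j ∈ Qset n ∨ (x j)⁻¹ ∈ Qset n) →
      (∀ (j : ℕ) (h : j + 1 < m), x ⟨j + 1, h⟩ ≠ (x ⟨j, by omega⟩)⁻¹) →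
      (List.ofFn x).prod ≠ 1 := by
  open QsetFreeAux in
  intro m hm x hQ hneq
  obtain ⟨m', rfl⟩ : ∃ m', m = m' + 1 := ⟨m - 1, by omega⟩
  have hκ : ∀ j, ∃ κ : Fin n → Letter, Good n κ ∧ x j = FreeGroup.mk (wordOf κ) :=
    fun j => exists_word' (x j) (hQ j)
  choose κ hG hx using hκ
  have hex : ∀ (j : ℕ) (h : j + 1 < m' + 1),
      ∃ i, κ ⟨j + 1, h⟩ i ≠ invL (κ ⟨j, by omega⟩ i) := by
    intro j h
    by_contra hcon
    push_neg at hcon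
    apply hneq j h
    have hfun : κ ⟨j + 1, h⟩ = fun i => invL (κ ⟨j, by omega⟩ i) := funext hcon
    rw [hx, hx, inv_mk_wordOf, hfun]
  obtain ⟨A, hred, hprod⟩ := key n m' κ hG hex
  have hxe : (List.ofFn x) = List.ofFn fun j => FreeGroup.mk (wordOf (κ j)) :=
    congrArg List.ofFn (funext fun j => hx j)
  rw [hxe, hprod]
  apply mk_ne_one hred
  intro hnil
  have := congrArg List.length hnil
  simp at this
  omega
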